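/- Let d ≥ 3 and 1 ≤ r ≤ d−2, and let ρ_r = (1/r) Σ_{l=1}^r E_{ll}. Then for any k ∈ {1,…,d} and any two distinct indices i, j with r < i, j ≤ d, the single-sample second moment of an off-diagonal entry of the C block of the covariant-measurement least squares estimator equals d(d+1)² · ∫_{U(d)} ⟨e_k, U*ρ_r U e_k⟩ · |U_{ik}|² |U_{jk}|² dU = (d+1)/(d+2). -/

import Mathlib

open MeasureTheory ProbabilityTheory Matrix
open scoped ComplexOrder

/-- The Borel (= product) σ-algebra on `d × d` complex matrices. -/
noncomputable instance matrixMeasurableSpace (d : ℕ) : MeasurableSpace (Matrix (Fin d) (Fin d) ℂ) :=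
  MeasurableSpace.pi

/-- A density matrix: positive semidefinite with trace one. -/
def IsDensityMatrix {d : ℕ} (ρ : Matrix (Fin d) (Fin d) ℂ) : Prop :=
  ρ.PosSemidef ∧ ρ.trace = 1

/-- The rank-one projection `U E_{jj} U*`. -/
noncomputable def covProj (d : ℕ) (j : Fin d) (U : Matrix.unitaryGroup (Fin d) ℂ) :
    Matrix (Fin d) (Fin d) ℂ :=
  (U : Matrix (Fin d) (Fin d) ℂ) * Matrix.single j j 1 *
    star (U : Matrix (Fin d) (Fin d) ℂ)

/-- The outcome law `μ_ρ` of the covariant measurement on the state `ρ`, built from the Haar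
probability measure `μ` on the unitary group: the distribution of `U E_{JJ} U*` where `U ~ μ`
and, conditionally on `U`, `J = j` has probability `⟨e_j, U* ρ U e_j⟩`. -/
noncomputable def covariantLaw (d : ℕ) (μ : Measure (Matrix.unitaryGroup (Fin d) ℂ))
    (ρ : Matrix (Fin d) (Fin d) ℂ) : Measure (Matrix (Fin d) (Fin d) ℂ) :=
  Measure.sum fun j : Fin d =>
    Measure.map (covProj d j)
      (μ.withDensity fun U =>
        ENNReal.ofReal
          ((star (U : Matrix (Fin d) (Fin d) ℂ) * ρ * (U : Matrix (Fin d) (Fin d) ℂ)) j j).re)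

/-- The least squares estimator `ρ̂_LS = (1/N) Σ_i ((d+1) P_i - I)`. -/
noncomputable def lsEst {Ω : Type*} (d N : ℕ) (P : Fin N → Ω → Matrix (Fin d) (Fin d) ℂ)
    (ω : Ω) : Matrix (Fin d) (Fin d) ℂ :=
  (N : ℂ)⁻¹ • ∑ i, ((d + 1 : ℂ) • P i ω - 1)

/-- Squared Frobenius norm `‖A‖₂² = Tr(A* A)`. -/
noncomputable def frobSq {d : ℕ} (A : Matrix (Fin d) (Fin d) ℂ) : ℝ :=
  (Matrix.trace (Aᴴ * A)).re

/-- Frobenius norm `‖A‖₂ = (Tr(A* A))^{1/2}`. -/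
noncomputable def frobNorm {d : ℕ} (A : Matrix (Fin d) (Fin d) ℂ) : ℝ :=
  Real.sqrt (Matrix.trace (Aᴴ * A)).re

/-- Operator norm (largest singular value) of a matrix, as the `ℓ² → ℓ²` operator norm. -/
noncomputable def opNorm {d : ℕ} (A : Matrix (Fin d) (Fin d) ℂ) : ℝ :=
  ‖LinearMap.toContinuousLinearMap (Matrix.toEuclideanLin A)‖

/-- Trace norm `‖A‖₁ = Tr|A|`: the sum of the singular values of `A`. -/
noncomputable def traceNorm {d : ℕ} (A : Matrix (Fin d) (Fin d) ℂ) : ℝ :=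
  ∑ i, Real.sqrt ((Matrix.posSemidef_conjTranspose_mul_self A).1.eigenvalues i)

/-- The rank-`r` density matrix `ρ_r = (1/r) Σ_{i=1}^r E_{ii}`. -/
noncomputable def rhoR (d r : ℕ) : Matrix (Fin d) (Fin d) ℂ :=
  (r : ℂ)⁻¹ • ∑ i : Fin d, if (i : ℕ) < r then Matrix.single i i 1 else 0

namespace CovAux
variable {d : ℕ}

lemma meas_entry' (a b : Fin d) : Measurable fun M : Matrix (Fin d) (Fin d) ℂ => M a b := by
  have h : Measurable fun g : Fin d → Fin d → ℂ => g a b :=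
    (measurable_pi_apply b).comp (measurable_pi_apply a)
  exact h

lemma meas_entry (a b : Fin d) :
    Measurable fun U : Matrix.unitaryGroup (Fin d) ℂ => (U : Matrix (Fin d) (Fin d) ℂ) a b :=
  (meas_entry' a b).comp measurable_subtype_coe

lemma meas_mul (V : Matrix.unitaryGroup (Fin d) ℂ) :
    Measurable fun U : Matrix.unitaryGroup (Fin d) ℂ => V * U := by
  apply Measurable.subtype_mk
  apply measurable_pi_lambda
  intro a
  apply measurable_pi_lambda
  intro b
  simp only [Matrix.mul_apply]
  exact Finset.measurable_sum _ fun c _ => (meas_entry c b).const_mul _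

lemma integral_inv (μ : Measure (Matrix.unitaryGroup (Fin d) ℂ))
    (hμ : ∀ V : Matrix.unitaryGroup (Fin d) ℂ, μ.map (fun U => V * U) = μ)
    (V : Matrix.unitaryGroup (Fin d) ℂ) (f : Matrix.unitaryGroup (Fin d) ℂ → ℝ)
    (hf : Measurable f) : ∫ U, f (V * U) ∂μ = ∫ U, f U ∂μ := by
  conv_rhs => rw [← hμ V]
  rw [integral_map (meas_mul V).aemeasurable]
  rw [hμ V]
  exact hf.aestronglyMeasurable

lemma vanish (μ : Measure (Matrix.unitaryGroup (Fin d) ℂ))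
    (hμ : ∀ V : Matrix.unitaryGroup (Fin d) ℂ, μ.map (fun U => V * U) = μ)
    (V : Matrix.unitaryGroup (Fin d) ℂ) (f : Matrix.unitaryGroup (Fin d) ℂ → ℝ)
    (hf : Measurable f) (hodd : ∀ U, f (V * U) = - f U) : ∫ U, f U ∂μ = 0 := by
  have h := integral_inv μ hμ V f hf
  simp only [hodd, integral_neg] at h
  linarith

lemma two_term {a b : Fin d} (hab : a ≠ b) (f : Fin d → ℂ)
    (hf : ∀ c, c ≠ a → c ≠ b → f c = 0) : ∑ c, f c = f a + f b := by
  rw [← Finset.sum_pair hab]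
  refine (Finset.sum_subset (Finset.subset_univ _) ?_).symm
  intro c _ hc
  simp only [Finset.mem_insert, Finset.mem_singleton, not_or] at hc
  exact hf c hc.1 hc.2

def phaseM (a : Fin d) : Matrix (Fin d) (Fin d) ℂ :=
  Matrix.diagonal fun p => if p = a then Complex.I else 1

lemma phaseM_mul (a : Fin d) (M : Matrix (Fin d) (Fin d) ℂ) (p b : Fin d) :
    (phaseM a * M) p b = (if p = a then Complex.I else 1) * M p b := by
  rw [phaseM, Matrix.diagonal_mul]

lemma phaseM_mem (a : Fin d) : phaseM a ∈ Matrix.unitaryGroup (Fin d) ℂ := by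
  rw [Matrix.mem_unitaryGroup_iff', Matrix.star_eq_conjTranspose]
  rw [phaseM, Matrix.diagonal_conjTranspose, Matrix.diagonal_mul_diagonal]
  ext p q
  by_cases hpq : p = q
  · subst hpq
    by_cases hpa : p = a <;> simp [Matrix.diagonal_apply, Matrix.one_apply, hpa, Complex.conj_I]
  · simp [Matrix.diagonal_apply, Matrix.one_apply, hpq]

noncomputable def rotE (a b : Fin d) : Fin d → Fin d → ℝ := fun p q =>
  if p = a then (if q = a then (Real.sqrt 2)⁻¹ else if q = b then (Real.sqrt 2)⁻¹ else 0)
  else if p = b then (if q = a then (Real.sqrt 2)⁻¹ else if q = b then -(Real.sqrt 2)⁻¹ else 0)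
  else if q = p then 1 else 0

noncomputable def rotM (a b : Fin d) : Matrix (Fin d) (Fin d) ℂ :=
  Matrix.of fun p q => ((rotE a b p q : ℝ) : ℂ)

lemma s_mul_s : (((Real.sqrt 2)⁻¹ : ℝ) : ℂ) * (((Real.sqrt 2)⁻¹ : ℝ) : ℂ) = 1/2 := by
  norm_cast
  rw [← mul_inv, Real.mul_self_sqrt (by norm_num : (0:ℝ) ≤ 2)]
  norm_num

lemma rotM_mul (a b : Fin d) (hab : a ≠ b) (M : Matrix (Fin d) (Fin d) ℂ) (p q : Fin d) :
    (rotM a b * M) p q =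
      if p = a then (((Real.sqrt 2)⁻¹ : ℝ) : ℂ) * (M a q + M b q)
      else if p = b then (((Real.sqrt 2)⁻¹ : ℝ) : ℂ) * (M a q - M b q)
      else M p q := by
  rw [Matrix.mul_apply]
  by_cases hpa : p = a
  · subst hpa
    rw [two_term hab (fun c => rotM p b p c * M c q) ?vanish]
    · simp [rotM, rotE, hab, mul_add]
    case vanish => intro c hca hcb; simp [rotM, rotE, hca, hcb, Ne.symm hca]
  · by_cases hpb : p = b
    · subst hpb
      rw [two_term hab (fun c => rotM a p p c * M c q) ?v2]
      · simp [rotM, rotE, hab, Ne.symm hab, mul_sub, sub_eq_add_neg]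
        ring
      case v2 => intro c hca hcb; simp [rotM, rotE, hca, hcb, Ne.symm hab]
    · simp only [hpa, hpb, if_false]
      rw [Finset.sum_eq_single p]
      · simp [rotM, rotE, hpa, hpb]
      · intro c _ hcp; simp [rotM, rotE, hpa, hpb, hcp]
      · simp

lemma rotE_symm (a b : Fin d) (p q : Fin d) : rotE a b p q = rotE a b q p := by
  unfold rotE
  by_cases h1 : p = a <;> by_cases h2 : p = b <;> by_cases h3 : q = a <;> by_cases h4 : q = b <;>
    simp only [h1, h2, h3, h4, if_true, if_false] <;> simp_all [eq_comm]

lemma rotM_apply (a b : Fin d) (p q : Fin d) :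
    rotM a b p q = ((rotE a b p q : ℝ) : ℂ) := rfl

lemma rotM_mem (a b : Fin d) (hab : a ≠ b) : rotM a b ∈ Matrix.unitaryGroup (Fin d) ℂ := by
  have hsymm : (rotM a b)ᴴ = rotM a b := by
    ext p q
    rw [Matrix.conjTranspose_apply, rotM]
    simp only [Matrix.of_apply]
    rw [RCLike.star_def, Complex.conj_ofReal, rotE_symm]
  rw [Matrix.mem_unitaryGroup_iff', Matrix.star_eq_conjTranspose, hsymm]
  ext p q
  rw [rotM_mul a b hab]
  have hs := s_mul_s
  by_cases hpa : p = a
  · rw [if_pos hpa]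
    by_cases hqa : q = a
    · have hpq : p = q := hpa.trans hqa.symm
      simp only [rotM_apply, rotE, if_pos rfl, if_neg (Ne.symm hab), if_pos hqa,
        Matrix.one_apply, if_pos hpq]
      push_cast at hs ⊢
      linear_combination 2 * hs
    · by_cases hqb : q = b
      · have hpq : p ≠ q := fun h => hab (hpa.symm.trans (h.trans hqb))
        simp only [rotM_apply, rotE, if_pos rfl, if_neg (Ne.symm hab), if_neg hqa, if_pos hqb,
          Matrix.one_apply, if_neg hpq]
        push_cast
        ring
      · have hpq : p ≠ q := fun h => hqa (h.symm.trans hpa)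
        simp only [rotM_apply, rotE, if_pos rfl, if_neg (Ne.symm hab), if_neg hqa, if_neg hqb,
          Matrix.one_apply, if_neg hpq]
        push_cast
        ring
  · rw [if_neg hpa]
    by_cases hpb : p = b
    · rw [if_pos hpb]
      by_cases hqa : q = a
      · have hpq : p ≠ q := fun h => hpa (h.trans hqa)
        simp only [rotM_apply, rotE, if_pos rfl, if_neg (Ne.symm hab), if_pos hqa,
          Matrix.one_apply, if_neg hpq]
        push_cast
        ring
      · by_cases hqb : q = b
        · have hpq : p = q := hpb.trans hqb.symm
          simp only [rotM_apply, rotE, if_pos rfl, if_neg (Ne.symm hab), if_neg hqa, if_pos hqb,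
            Matrix.one_apply, if_pos hpq]
          push_cast at hs ⊢
          linear_combination 2 * hs
        · have hpq : p ≠ q := fun h => hqb (h.symm.trans hpb)
          simp only [rotM_apply, rotE, if_pos rfl, if_neg (Ne.symm hab), if_neg hqa, if_neg hqb,
            Matrix.one_apply, if_neg hpq]
          push_cast
          ring
    · rw [if_neg hpb]
      simp only [rotM_apply, rotE, if_neg hpa, if_neg hpb, Matrix.one_apply]
      by_cases hpq : p = q
      · simp [hpq]
      · rw [if_neg hpq, if_neg (fun h : q = p => hpq h.symm)]
        simp

noncomputable def nk (k a : Fin d) (U : Matrix.unitaryGroup (Fin d) ℂ) : ℝ :=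
  ‖(U : Matrix (Fin d) (Fin d) ℂ) a k‖^2

noncomputable def Rk (k a b : Fin d) (U : Matrix.unitaryGroup (Fin d) ℂ) : ℝ :=
  (((U : Matrix (Fin d) (Fin d) ℂ) a k)^2 *
    ((starRingEnd ℂ) ((U : Matrix (Fin d) (Fin d) ℂ) b k))^2).re

lemma meas_nk (k a : Fin d) : Measurable (nk k a) :=
  ((meas_entry a k).norm).pow_const 2

lemma meas_Rk (k a b : Fin d) : Measurable (Rk k a b) :=
  Complex.measurable_re.comp
    (((meas_entry a k).pow_const 2).mul
      (((Complex.continuous_conj.measurable).comp (meas_entry b k)).pow_const 2))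

lemma nk_nonneg (k a : Fin d) (U : Matrix.unitaryGroup (Fin d) ℂ) : 0 ≤ nk k a U :=
  sq_nonneg _

lemma sum_nk (k : Fin d) (U : Matrix.unitaryGroup (Fin d) ℂ) : ∑ a, nk k a U = 1 := by
  have h1 : star (U : Matrix (Fin d) (Fin d) ℂ) * U = 1 := (Unitary.mem_iff.mp U.prop).1
  have h2 := congrArg (fun M => M k k) h1
  simp only [Matrix.mul_apply, Matrix.star_apply] at h2
  have h3 : ∀ a, star ((U : Matrix (Fin d) (Fin d) ℂ) a k) * (U : Matrix (Fin d) (Fin d) ℂ) a k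
      = ((nk k a U : ℝ) : ℂ) := by
    intro a
    rw [RCLike.star_def, Complex.conj_mul', nk]
    push_cast
    ring
  simp only [h3] at h2
  rw [← Complex.ofReal_sum, Matrix.one_apply_eq] at h2
  exact_mod_cast h2

lemma nk_le_one (k a : Fin d) (U : Matrix.unitaryGroup (Fin d) ℂ) : nk k a U ≤ 1 := by
  rw [← sum_nk k U]
  exact Finset.single_le_sum (fun b _ => nk_nonneg k b U) (Finset.mem_univ a)

variable (μ : Measure (Matrix.unitaryGroup (Fin d) ℂ)) [IsProbabilityMeasure μ]

lemma int_bdd (f : Matrix.unitaryGroup (Fin d) ℂ → ℝ) (C : ℝ) (hf : Measurable f)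
    (hb : ∀ U, |f U| ≤ C) : Integrable f μ := by
  refine (integrable_const C).mono' hf.aestronglyMeasurable (ae_of_all _ fun U => ?_)
  simpa using hb U

lemma entry_abs_le (k a : Fin d) (U : Matrix.unitaryGroup (Fin d) ℂ) :
    ‖(U : Matrix (Fin d) (Fin d) ℂ) a k‖ ≤ 1 := by
  have h := nk_le_one k a U
  rw [nk] at h
  nlinarith [norm_nonneg ((U : Matrix (Fin d) (Fin d) ℂ) a k)]

lemma Rk_abs_le (k a b : Fin d) (U : Matrix.unitaryGroup (Fin d) ℂ) : |Rk k a b U| ≤ 1 := by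
  have habs := Complex.abs_re_le_norm (((U : Matrix (Fin d) (Fin d) ℂ) a k)^2 *
    ((starRingEnd ℂ) ((U : Matrix (Fin d) (Fin d) ℂ) b k))^2)
  rw [Rk]
  refine habs.trans ?_
  rw [norm_mul, norm_pow, norm_pow, Complex.norm_conj]
  have ha := entry_abs_le k a U
  have hb := entry_abs_le k b U
  have h0a := norm_nonneg ((U : Matrix (Fin d) (Fin d) ℂ) a k)
  have h0b := norm_nonneg ((U : Matrix (Fin d) (Fin d) ℂ) b k)
  have : ‖(U : Matrix (Fin d) (Fin d) ℂ) a k‖ ^ 2 ≤ 1 := by nlinarith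
  have : ‖(U : Matrix (Fin d) (Fin d) ℂ) b k‖ ^ 2 ≤ 1 := by nlinarith
  exact mul_le_one₀ (by assumption) (by positivity) (by assumption)

lemma integrable_nk3 (k a b c : Fin d) :
    Integrable (fun U => nk k a U * nk k b U * nk k c U) μ := by
  refine int_bdd μ _ 1 (((meas_nk k a).mul (meas_nk k b)).mul (meas_nk k c)) fun U => ?_
  have h0 : 0 ≤ nk k a U * nk k b U * nk k c U :=
    mul_nonneg (mul_nonneg (nk_nonneg _ _ _) (nk_nonneg _ _ _)) (nk_nonneg _ _ _)
  rw [abs_of_nonneg h0]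
  exact mul_le_one₀ (mul_le_one₀ (nk_le_one k a U) (nk_nonneg k b U) (nk_le_one k b U))
    (nk_nonneg k c U) (nk_le_one k c U)

lemma integrable_nk2 (k a b : Fin d) : Integrable (fun U => nk k a U * nk k b U) μ := by
  refine int_bdd μ _ 1 ((meas_nk k a).mul (meas_nk k b)) fun U => ?_
  have h0 : 0 ≤ nk k a U * nk k b U := mul_nonneg (nk_nonneg _ _ _) (nk_nonneg _ _ _)
  rw [abs_of_nonneg h0]
  exact mul_le_one₀ (nk_le_one k a U) (nk_nonneg k b U) (nk_le_one k b U)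

lemma integrable_nk1 (k a : Fin d) : Integrable (nk k a) μ :=
  int_bdd μ _ 1 (meas_nk k a) fun U => by
    rw [abs_of_nonneg (nk_nonneg k a U)]; exact nk_le_one k a U

lemma integrable_Rk_nk (k a b c : Fin d) :
    Integrable (fun U => Rk k a b U * nk k c U) μ := by
  refine int_bdd μ _ 1 ((meas_Rk k a b).mul (meas_nk k c)) fun U => ?_
  rw [abs_mul, abs_of_nonneg (nk_nonneg k c U)]
  exact mul_le_one₀ (Rk_abs_le k a b U) (nk_nonneg k c U) (nk_le_one k c U)

lemma integrable_Rk (k a b : Fin d) : Integrable (Rk k a b) μ :=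
  int_bdd μ _ 1 (meas_Rk k a b) fun U => Rk_abs_le k a b U

lemma swap_cond (p q : Fin d) (a x : Fin d) :
    (a = Equiv.swap p q x) ↔ (x = Equiv.swap p q a) := by
  constructor <;> intro h <;> subst h <;> simp

def swapM (p q : Fin d) : Matrix (Fin d) (Fin d) ℂ :=
  Matrix.of fun a b => if a = Equiv.swap p q b then 1 else 0

lemma swapM_mul (p q : Fin d) (M : Matrix (Fin d) (Fin d) ℂ) (a b : Fin d) :
    (swapM p q * M) a b = M (Equiv.swap p q a) b := by
  simp only [Matrix.mul_apply, swapM, Matrix.of_apply, ite_mul, one_mul, zero_mul, swap_cond]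
  simp

lemma swapM_mem (p q : Fin d) : swapM p q ∈ Matrix.unitaryGroup (Fin d) ℂ := by
  rw [Matrix.mem_unitaryGroup_iff']
  ext a b
  simp only [Matrix.mul_apply, Matrix.conjTranspose_apply, swapM, Matrix.of_apply,
    apply_ite (star : ℂ → ℂ), star_one, star_zero, ite_mul, one_mul, zero_mul, mul_ite,
    mul_one, mul_zero, swap_cond]
  simp [Finset.sum_ite_eq, Matrix.one_apply, eq_comm]

noncomputable def swapU (p q : Fin d) : Matrix.unitaryGroup (Fin d) ℂ :=
  ⟨swapM p q, swapM_mem p q⟩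

noncomputable def phaseU (a : Fin d) : Matrix.unitaryGroup (Fin d) ℂ :=
  ⟨phaseM a, phaseM_mem a⟩

noncomputable def rotU (a b : Fin d) (hab : a ≠ b) : Matrix.unitaryGroup (Fin d) ℂ :=
  ⟨rotM a b, rotM_mem a b hab⟩

lemma nk_swap (k p q a : Fin d) (U : Matrix.unitaryGroup (Fin d) ℂ) :
    nk k a (swapU p q * U) = nk k (Equiv.swap p q a) U := by
  rw [nk, nk,
    show ((swapU p q * U : Matrix.unitaryGroup (Fin d) ℂ) : Matrix (Fin d) (Fin d) ℂ)
      = swapM p q * (U : Matrix (Fin d) (Fin d) ℂ) from rfl, swapM_mul]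

lemma normsq_eq (z : ℂ) : ‖z‖^2 = Complex.normSq z := by
  rw [← Complex.sq_norm]

lemma snorm (z : ℂ) : ‖(((Real.sqrt 2)⁻¹ : ℝ) : ℂ) * z‖^2 = 1/2 * ‖z‖^2 := by
  rw [norm_mul, mul_pow, Complex.norm_real, Real.norm_eq_abs, abs_of_nonneg (by positivity),
    inv_pow, Real.sq_sqrt (by norm_num : (0:ℝ) ≤ 2)]
  norm_num

lemma core2 (v w : ℂ) :
    (1/2 * ‖v+w‖^2) * (1/2 * ‖v-w‖^2)
      = 1/4 * (‖v‖^2 * ‖v‖^2) + 1/4 * (‖w‖^2 * ‖w‖^2)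
        - 1/2 * ((v^2 * ((starRingEnd ℂ) w)^2).re) := by
  simp only [normsq_eq]
  simp only [pow_two, Complex.normSq_apply, Complex.add_re, Complex.add_im, Complex.sub_re,
    Complex.sub_im, Complex.mul_re, Complex.mul_im, Complex.conj_re, Complex.conj_im]
  ring

lemma rot_entry_a (a b : Fin d) (hab : a ≠ b) (U : Matrix.unitaryGroup (Fin d) ℂ) (k : Fin d) :
    ((rotU a b hab * U : Matrix.unitaryGroup (Fin d) ℂ) : Matrix (Fin d) (Fin d) ℂ) a k
      = (((Real.sqrt 2)⁻¹ : ℝ) : ℂ) *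
        ((U : Matrix (Fin d) (Fin d) ℂ) a k + (U : Matrix (Fin d) (Fin d) ℂ) b k) := by
  rw [show ((rotU a b hab * U : Matrix.unitaryGroup (Fin d) ℂ) : Matrix (Fin d) (Fin d) ℂ)
      = rotM a b * (U : Matrix (Fin d) (Fin d) ℂ) from rfl, rotM_mul a b hab, if_pos rfl]

lemma rot_entry_b (a b : Fin d) (hab : a ≠ b) (U : Matrix.unitaryGroup (Fin d) ℂ) (k : Fin d) :
    ((rotU a b hab * U : Matrix.unitaryGroup (Fin d) ℂ) : Matrix (Fin d) (Fin d) ℂ) b k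
      = (((Real.sqrt 2)⁻¹ : ℝ) : ℂ) *
        ((U : Matrix (Fin d) (Fin d) ℂ) a k - (U : Matrix (Fin d) (Fin d) ℂ) b k) := by
  rw [show ((rotU a b hab * U : Matrix.unitaryGroup (Fin d) ℂ) : Matrix (Fin d) (Fin d) ℂ)
      = rotM a b * (U : Matrix (Fin d) (Fin d) ℂ) from rfl, rotM_mul a b hab,
    if_neg (Ne.symm hab), if_pos rfl]

lemma rot_entry_c (a b : Fin d) (hab : a ≠ b) (c : Fin d) (hca : c ≠ a) (hcb : c ≠ b)
    (U : Matrix.unitaryGroup (Fin d) ℂ) (k : Fin d) :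
    ((rotU a b hab * U : Matrix.unitaryGroup (Fin d) ℂ) : Matrix (Fin d) (Fin d) ℂ) c k
      = (U : Matrix (Fin d) (Fin d) ℂ) c k := by
  rw [show ((rotU a b hab * U : Matrix.unitaryGroup (Fin d) ℂ) : Matrix (Fin d) (Fin d) ℂ)
      = rotM a b * (U : Matrix (Fin d) (Fin d) ℂ) from rfl, rotM_mul a b hab,
    if_neg hca, if_neg hcb]

lemma phase_entry (t : Fin d) (U : Matrix.unitaryGroup (Fin d) ℂ) (p k : Fin d) :
    ((phaseU t * U : Matrix.unitaryGroup (Fin d) ℂ) : Matrix (Fin d) (Fin d) ℂ) p k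
      = (if p = t then Complex.I else 1) * (U : Matrix (Fin d) (Fin d) ℂ) p k := by
  rw [show ((phaseU t * U : Matrix.unitaryGroup (Fin d) ℂ) : Matrix (Fin d) (Fin d) ℂ)
      = phaseM t * (U : Matrix (Fin d) (Fin d) ℂ) from rfl, phaseM_mul]

lemma nk_phase (k t a : Fin d) (U : Matrix.unitaryGroup (Fin d) ℂ) :
    nk k a (phaseU t * U) = nk k a U := by
  rw [nk, nk, phase_entry, norm_mul, mul_pow]
  by_cases h : a = t <;> simp [h]

lemma Rk_phase (k a b : Fin d) (hab : a ≠ b) (U : Matrix.unitaryGroup (Fin d) ℂ) :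
    Rk k a b (phaseU a * U) = - Rk k a b U := by
  rw [Rk, Rk, phase_entry, phase_entry, if_pos rfl, if_neg (Ne.symm hab), one_mul]
  rw [show (Complex.I * (U : Matrix (Fin d) (Fin d) ℂ) a k)^2
      * ((starRingEnd ℂ) ((U : Matrix (Fin d) (Fin d) ℂ) b k))^2
      = -((((U : Matrix (Fin d) (Fin d) ℂ) a k))^2
        * ((starRingEnd ℂ) ((U : Matrix (Fin d) (Fin d) ℂ) b k))^2) by
    rw [mul_pow, Complex.I_sq]; ring]
  rw [Complex.neg_re]

noncomputable def I1 (μ : Measure (Matrix.unitaryGroup (Fin d) ℂ)) (k a : Fin d) : ℝ :=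
  ∫ U, nk k a U ∂μ

noncomputable def I2 (μ : Measure (Matrix.unitaryGroup (Fin d) ℂ)) (k a b : Fin d) : ℝ :=
  ∫ U, nk k a U * nk k b U ∂μ

noncomputable def I3 (μ : Measure (Matrix.unitaryGroup (Fin d) ℂ)) (k a b c : Fin d) : ℝ :=
  ∫ U, nk k a U * nk k b U * nk k c U ∂μ


variable (hμ : ∀ V : Matrix.unitaryGroup (Fin d) ℂ, μ.map (fun U => V * U) = μ)
include hμ

lemma I1_swap (k p q a : Fin d) : I1 μ k (Equiv.swap p q a) = I1 μ k a := by
  rw [I1, I1, ← integral_inv μ hμ (swapU p q) (nk k a) (meas_nk k a)]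
  simp only [nk_swap]

lemma I2_swap (k p q a b : Fin d) :
    I2 μ k (Equiv.swap p q a) (Equiv.swap p q b) = I2 μ k a b := by
  rw [I2, I2, ← integral_inv μ hμ (swapU p q) (fun U => nk k a U * nk k b U)
    ((meas_nk k a).mul (meas_nk k b))]
  simp only [nk_swap]

lemma I3_swap (k p q a b c : Fin d) :
    I3 μ k (Equiv.swap p q a) (Equiv.swap p q b) (Equiv.swap p q c) = I3 μ k a b c := by
  rw [I3, I3, ← integral_inv μ hμ (swapU p q) (fun U => nk k a U * nk k b U * nk k c U)
    (((meas_nk k a).mul (meas_nk k b)).mul (meas_nk k c))]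
  simp only [nk_swap]

omit hμ [IsProbabilityMeasure μ] in
lemma I3_comm_aba (k a b : Fin d) : I3 μ k a b a = I3 μ k a a b := by
  rw [I3, I3]
  congr 1
  funext U
  ring

omit hμ [IsProbabilityMeasure μ] in
lemma I3_comm_abb (k a b : Fin d) : I3 μ k a b b = I3 μ k b b a := by
  rw [I3, I3]
  congr 1
  funext U
  ring

lemma rot2 (k a b : Fin d) (hab : a ≠ b) :
    I2 μ k a b = 1/4 * (I2 μ k a a + I2 μ k b b) := by
  have hR : ∫ U, Rk k a b U ∂μ = 0 :=
    vanish μ hμ (phaseU a) _ (meas_Rk k a b) (fun U => Rk_phase k a b hab U)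
  have hinv := integral_inv μ hμ (rotU a b hab) (fun U => nk k a U * nk k b U)
    ((meas_nk k a).mul (meas_nk k b))
  have hpt : ∀ U, nk k a ((rotU a b hab) * U) * nk k b ((rotU a b hab) * U)
      = 1/4 * (nk k a U * nk k a U) + 1/4 * (nk k b U * nk k b U) - 1/2 * Rk k a b U := by
    intro U
    rw [nk, nk, rot_entry_a, rot_entry_b, snorm, snorm, Rk]
    rw [show (nk k a U * nk k a U) = ‖(U : Matrix (Fin d) (Fin d) ℂ) a k‖^2
      * ‖(U : Matrix (Fin d) (Fin d) ℂ) a k‖^2 from rfl]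
    rw [show (nk k b U * nk k b U) = ‖(U : Matrix (Fin d) (Fin d) ℂ) b k‖^2
      * ‖(U : Matrix (Fin d) (Fin d) ℂ) b k‖^2 from rfl]
    exact core2 _ _
  have hInt1 : Integrable (fun U => 1/4 * (nk k a U * nk k a U)
      + 1/4 * (nk k b U * nk k b U)) μ :=
    Integrable.add ((integrable_nk2 μ k a a).const_mul (1/4))
      ((integrable_nk2 μ k b b).const_mul (1/4))
  have hInt2 : Integrable (fun U => 1/2 * Rk k a b U) μ :=
    (integrable_Rk μ k a b).const_mul (1/2)
  rw [I2, ← hinv]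
  simp only [hpt]
  rw [integral_sub hInt1 hInt2,
    integral_add ((integrable_nk2 μ k a a).const_mul (1/4))
      ((integrable_nk2 μ k b b).const_mul (1/4)),
    integral_const_mul, integral_const_mul, integral_const_mul, hR]
  rw [I2, I2]
  ring

lemma rot3 (k a b c : Fin d) (hab : a ≠ b) (hca : c ≠ a) (hcb : c ≠ b) :
    I3 μ k a b c = 1/4 * (I3 μ k a a c + I3 μ k b b c) := by
  have hR : ∫ U, Rk k a b U * nk k c U ∂μ = 0 := by
    refine vanish μ hμ (phaseU a) _ ((meas_Rk k a b).mul (meas_nk k c)) fun U => ?_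
    rw [Rk_phase k a b hab U, nk_phase]
    ring
  have hinv := integral_inv μ hμ (rotU a b hab) (fun U => nk k a U * nk k b U * nk k c U)
    (((meas_nk k a).mul (meas_nk k b)).mul (meas_nk k c))
  have hpt : ∀ U, nk k a ((rotU a b hab) * U) * nk k b ((rotU a b hab) * U)
        * nk k c ((rotU a b hab) * U)
      = 1/4 * (nk k a U * nk k a U * nk k c U) + 1/4 * (nk k b U * nk k b U * nk k c U)
        - 1/2 * (Rk k a b U * nk k c U) := by
    intro U
    have hc : nk k c ((rotU a b hab) * U) = nk k c U := by
      rw [nk, nk, rot_entry_c a b hab c hca hcb]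
    have h2 : nk k a ((rotU a b hab) * U) * nk k b ((rotU a b hab) * U)
        = 1/4 * (nk k a U * nk k a U) + 1/4 * (nk k b U * nk k b U) - 1/2 * Rk k a b U := by
      rw [nk, nk, rot_entry_a, rot_entry_b, snorm, snorm, Rk]
      rw [show (nk k a U * nk k a U) = ‖(U : Matrix (Fin d) (Fin d) ℂ) a k‖^2
        * ‖(U : Matrix (Fin d) (Fin d) ℂ) a k‖^2 from rfl]
      rw [show (nk k b U * nk k b U) = ‖(U : Matrix (Fin d) (Fin d) ℂ) b k‖^2
        * ‖(U : Matrix (Fin d) (Fin d) ℂ) b k‖^2 from rfl]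
      exact core2 _ _
    rw [hc, h2]
    ring
  have hInt1 : Integrable (fun U => 1/4 * (nk k a U * nk k a U * nk k c U)
      + 1/4 * (nk k b U * nk k b U * nk k c U)) μ :=
    Integrable.add ((integrable_nk3 μ k a a c).const_mul (1/4))
      ((integrable_nk3 μ k b b c).const_mul (1/4))
  have hInt2 : Integrable (fun U => 1/2 * (Rk k a b U * nk k c U)) μ :=
    (integrable_Rk_nk μ k a b c).const_mul (1/2)
  rw [I3, ← hinv]
  simp only [hpt]
  rw [integral_sub hInt1 hInt2,
    integral_add ((integrable_nk3 μ k a a c).const_mul (1/4))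
      ((integrable_nk3 μ k b b c).const_mul (1/4)),
    integral_const_mul, integral_const_mul, integral_const_mul, hR]
  rw [I3, I3]
  ring

omit hμ in
lemma sum_I1 (k : Fin d) : ∑ a, I1 μ k a = 1 := by
  rw [show ∑ a, I1 μ k a = ∫ U, ∑ a, nk k a U ∂μ from
    (integral_finset_sum _ (fun a _ => integrable_nk1 μ k a)).symm]
  simp only [sum_nk]
  simp

omit hμ in
lemma sum_I2 (k a : Fin d) : ∑ p, I2 μ k a p = I1 μ k a := by
  rw [show ∑ p, I2 μ k a p = ∫ U, ∑ p, nk k a U * nk k p U ∂μ from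
    (integral_finset_sum _ (fun p _ => integrable_nk2 μ k a p)).symm, I1]
  congr 1
  funext U
  rw [← Finset.mul_sum, sum_nk, mul_one]

omit hμ in
lemma sum_I3 (k a b : Fin d) : ∑ p, I3 μ k a b p = I2 μ k a b := by
  rw [show ∑ p, I3 μ k a b p = ∫ U, ∑ p, nk k a U * nk k b U * nk k p U ∂μ from
    (integral_finset_sum _ (fun p _ => integrable_nk3 μ k a b p)).symm, I2]
  congr 1
  funext U
  rw [← Finset.mul_sum, sum_nk, mul_one]

lemma I1_value (hd : 0 < d) (k a : Fin d) : I1 μ k a = 1 / d := by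
  have hconst : ∀ x, I1 μ k x = I1 μ k a := by
    intro x
    have h := I1_swap μ hμ k x a a
    rwa [Equiv.swap_apply_right] at h
  have hsum := sum_I1 μ k
  rw [Finset.sum_congr rfl (fun x _ => hconst x), Finset.sum_const, Finset.card_univ,
    Fintype.card_fin, nsmul_eq_mul] at hsum
  have hd' : (d : ℝ) ≠ 0 := Nat.cast_ne_zero.mpr hd.ne'
  rw [eq_div_iff hd']
  linarith

lemma I2_diag_const (k a x : Fin d) : I2 μ k x x = I2 μ k a a := by
  have h := I2_swap μ hμ k x a a a
  rwa [Equiv.swap_apply_right] at h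

lemma I2_offdiag (k a b : Fin d) (hab : a ≠ b) : I2 μ k a b = 1/2 * I2 μ k a a := by
  rw [rot2 μ hμ k a b hab, I2_diag_const μ hμ k a b]
  ring

lemma I2_diag_value (hd : 0 < d) (k a : Fin d) : I2 μ k a a = 2 / (d * (d+1)) := by
  have hsum := sum_I2 μ k a
  rw [I1_value μ hμ hd k a] at hsum
  rw [← Finset.add_sum_erase _ _ (Finset.mem_univ a)] at hsum
  rw [Finset.sum_congr rfl (fun p hp => I2_offdiag μ hμ k a p
    (Ne.symm (Finset.ne_of_mem_erase hp)))] at hsum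
  rw [Finset.sum_const, Finset.card_erase_of_mem (Finset.mem_univ a), Finset.card_univ,
    Fintype.card_fin, nsmul_eq_mul] at hsum
  have hcast : ((d - 1 : ℕ) : ℝ) = (d : ℝ) - 1 := by
    rw [Nat.cast_sub hd]
    norm_num
  rw [hcast] at hsum
  have hd' : (0:ℝ) < d := Nat.cast_pos.mpr hd
  have h1 : (d : ℝ) + 1 ≠ 0 := by positivity
  field_simp at hsum ⊢
  nlinarith [hsum]

lemma I2_offdiag_value (hd : 0 < d) (k a b : Fin d) (hab : a ≠ b) :
    I2 μ k a b = 1 / (d * (d+1)) := by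
  rw [I2_offdiag μ hμ k a b hab, I2_diag_value μ hμ hd k a]
  have hd' : (0:ℝ) < d := Nat.cast_pos.mpr hd
  field_simp

lemma I3_value (hd : 3 ≤ d) (k a b c : Fin d) (hab : a ≠ b) (hac : a ≠ c) (hbc : b ≠ c) :
    I3 μ k a b c = 1 / (d * (d+1) * (d+2)) := by
  have hd1 : 1 ≤ d := le_trans (by norm_num) hd
  have hd0 : 0 < d := hd1
  set B := I3 μ k a a b with hB
  have h2 : I3 μ k a a c = B := by
    have h := I3_swap μ hμ k b c a a b
    rw [Equiv.swap_apply_left, Equiv.swap_apply_of_ne_of_ne hab hac] at h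
    exact h
  have g2 : I3 μ k b b a = B := by
    have h := I3_swap μ hμ k a b a a b
    rw [Equiv.swap_apply_left, Equiv.swap_apply_right] at h
    exact h
  have h1 : I3 μ k b b c = B := by
    have h := I3_swap μ hμ k a c b b a
    rw [Equiv.swap_apply_left, Equiv.swap_apply_of_ne_of_ne (Ne.symm hab) hbc] at h
    rw [h]
    exact g2
  have h3 : I3 μ k a b c = B / 2 := by
    rw [rot3 μ hμ k a b c hab (Ne.symm hac) (Ne.symm hbc), h2, h1]
    ring
  have h4 : I3 μ k a b a = B := I3_comm_aba μ k a b
  have h5 : I3 μ k a b b = B := by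
    rw [I3_comm_abb μ k a b]
    exact g2
  have hp : ∀ p, p ≠ a → p ≠ b → I3 μ k a b p = B / 2 := by
    intro p hpa hpb
    by_cases hpc : p = c
    · rw [hpc, h3]
    · have h := I3_swap μ hμ k p c a b p
      rw [Equiv.swap_apply_left, Equiv.swap_apply_of_ne_of_ne (Ne.symm hpa) hac,
        Equiv.swap_apply_of_ne_of_ne (Ne.symm hpb) hbc] at h
      rw [← h, h3]
  have hsum := sum_I3 μ k a b
  rw [I2_offdiag_value μ hμ hd0 k a b hab] at hsum
  have hbmem : b ∈ Finset.univ.erase a := Finset.mem_erase.mpr ⟨Ne.symm hab, Finset.mem_univ b⟩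
  rw [← Finset.add_sum_erase _ _ (Finset.mem_univ a), ← Finset.add_sum_erase _ _ hbmem] at hsum
  rw [Finset.sum_congr rfl (fun p hp' => by
    have hpb : p ≠ b := (Finset.mem_erase.mp hp').1
    have hpa : p ≠ a := (Finset.mem_erase.mp (Finset.mem_of_mem_erase hp')).1
    exact hp p hpa hpb)] at hsum
  rw [Finset.sum_const, Finset.card_erase_of_mem hbmem,
    Finset.card_erase_of_mem (Finset.mem_univ a), Finset.card_univ, Fintype.card_fin,
    nsmul_eq_mul, h4, h5] at hsum
  have hcast : ((d - 1 - 1 : ℕ) : ℝ) = (d : ℝ) - 2 := by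
    have h22 : d - 1 - 1 = d - 2 := by omega
    rw [h22, Nat.cast_sub (by omega : 2 ≤ d)]
    norm_num
  rw [hcast] at hsum
  have hdpos : (0:ℝ) < d := Nat.cast_pos.mpr hd0
  have hd3 : (3:ℝ) ≤ d := by exact_mod_cast hd
  rw [h3]
  have ha0 : (0:ℝ) < (d:ℝ) := hdpos
  have ha1 : (0:ℝ) < (d:ℝ) + 1 := by linarith
  have ha2 : (0:ℝ) < (d:ℝ) + 2 := by linarith
  field_simp at hsum ⊢
  nlinarith [hsum]


end CovAux

namespace CovAux
variable {d : ℕ}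

lemma rhoR_apply (r : ℕ) (p q : Fin d) :
    rhoR d r p q = if p = q ∧ (p:ℕ) < r then (r:ℂ)⁻¹ else 0 := by
  rw [rhoR, Matrix.smul_apply, Matrix.sum_apply]
  rw [Finset.sum_eq_single p]
  · by_cases hpq : p = q
    · subst hpq
      by_cases h : (p:ℕ) < r <;>
        simp [h, Matrix.single,
          apply_ite (fun M : Matrix (Fin d) (Fin d) ℂ => M p p)]
    · by_cases h : (p:ℕ) < r <;>
        simp [h, hpq, Matrix.single,
          apply_ite (fun M : Matrix (Fin d) (Fin d) ℂ => M p q)]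
  · intro x _ hxp
    by_cases h : (x:ℕ) < r <;>
      simp [h, Matrix.single,
        apply_ite (fun M : Matrix (Fin d) (Fin d) ℂ => M p q)] <;>
      try exact fun hx => absurd hx hxp
  · simp

lemma entry_key (r : ℕ) (U : Matrix.unitaryGroup (Fin d) ℂ) (k : Fin d) :
    (star (U : Matrix (Fin d) (Fin d) ℂ) * rhoR d r * (U : Matrix (Fin d) (Fin d) ℂ)) k k
      = ((∑ q : Fin d, if (q:ℕ) < r then
          (r:ℝ)⁻¹ * ‖(U : Matrix (Fin d) (Fin d) ℂ) q k‖^2 else 0 : ℝ) : ℂ) := by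
  rw [Matrix.mul_apply]
  have hinner : ∀ q : Fin d, (star (U : Matrix (Fin d) (Fin d) ℂ) * rhoR d r) k q
      = (starRingEnd ℂ) ((U : Matrix (Fin d) (Fin d) ℂ) q k)
        * (if (q:ℕ) < r then (r:ℂ)⁻¹ else 0) := by
    intro q
    rw [Matrix.mul_apply]
    rw [Finset.sum_eq_single q]
    · rw [rhoR_apply, Matrix.star_apply, RCLike.star_def]
      simp
    · intro x _ hxq
      rw [rhoR_apply]
      simp [hxq]
    · simp
  simp only [hinner]
  rw [Complex.ofReal_sum]
  congr 1
  funext q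
  by_cases h : (q:ℕ) < r
  · simp only [h, if_true]
    rw [show ((starRingEnd ℂ) ((U : Matrix (Fin d) (Fin d) ℂ) q k) * (r:ℂ)⁻¹)
        * (U : Matrix (Fin d) (Fin d) ℂ) q k
        = (r:ℂ)⁻¹ * ((U : Matrix (Fin d) (Fin d) ℂ) q k
          * (starRingEnd ℂ) ((U : Matrix (Fin d) (Fin d) ℂ) q k)) by ring,
      Complex.mul_conj']
    push_cast
    ring
  · simp [h]

end CovAux

/-- Second moment of an off-diagonal entry of the `C` block of the
covariant-measurement LS estimator for `ρ_r`:
`d(d+1)²·∫ ⟨e_k, U*ρ_r U e_k⟩·|U_{ik}|²|U_{jk}|² dU = (d+1)/(d+2)` for `r < i, j ≤ d`, `i ≠ j`. -/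
theorem covariant_ls_C_offdiagonal_moment
    (d r : ℕ) (hd : 3 ≤ d) (hr : 1 ≤ r) (hrd : r + 2 ≤ d)
    (μ : Measure (Matrix.unitaryGroup (Fin d) ℂ)) [IsProbabilityMeasure μ]
    (hμ : ∀ V : Matrix.unitaryGroup (Fin d) ℂ, μ.map (fun U => V * U) = μ)
    (k i j : Fin d) (hij : i ≠ j) (hi : r ≤ (i : ℕ)) (hj : r ≤ (j : ℕ)) :
    (d : ℝ) * ((d : ℝ) + 1) ^ 2 *
      ∫ U, ((star (U : Matrix (Fin d) (Fin d) ℂ) * rhoR d r * (U : Matrix (Fin d) (Fin d) ℂ)) k k).re *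
        (‖(U : Matrix (Fin d) (Fin d) ℂ) i k‖ ^ 2 * ‖(U : Matrix (Fin d) (Fin d) ℂ) j k‖ ^ 2) ∂μ
      = ((d : ℝ) + 1) / ((d : ℝ) + 2) := by
  classical
  have hpt : ∀ U : Matrix.unitaryGroup (Fin d) ℂ,
      ((star (U : Matrix (Fin d) (Fin d) ℂ) * rhoR d r * (U : Matrix (Fin d) (Fin d) ℂ)) k k).re *
        (‖(U : Matrix (Fin d) (Fin d) ℂ) i k‖ ^ 2 * ‖(U : Matrix (Fin d) (Fin d) ℂ) j k‖ ^ 2)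
      = ∑ q : Fin d, (if (q:ℕ) < r then
          (r:ℝ)⁻¹ * (CovAux.nk k q U * CovAux.nk k i U * CovAux.nk k j U) else 0) := by
    intro U
    rw [CovAux.entry_key r U k, Complex.ofReal_re, Finset.sum_mul]
    congr 1
    funext q
    by_cases h : (q:ℕ) < r
    · simp only [h, if_true, CovAux.nk]
      ring
    · simp [h]
  have hInt : ∀ q : Fin d, q ∈ Finset.univ → Integrable (fun U => if (q:ℕ) < r then
      (r:ℝ)⁻¹ * (CovAux.nk k q U * CovAux.nk k i U * CovAux.nk k j U) else 0) μ := by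
    intro q _
    by_cases h : (q:ℕ) < r
    · simp only [h, if_true]
      exact (CovAux.integrable_nk3 μ k q i j).const_mul _
    · simp only [h, if_false]
      exact integrable_zero _ _ _
  have hval : ∀ q : Fin d, (q:ℕ) < r →
      ∫ U, (r:ℝ)⁻¹ * (CovAux.nk k q U * CovAux.nk k i U * CovAux.nk k j U) ∂μ
        = (r:ℝ)⁻¹ * (1 / ((d:ℝ) * ((d:ℝ)+1) * ((d:ℝ)+2))) := by
    intro q hq
    rw [integral_const_mul]
    have h3 := CovAux.I3_value μ hμ hd k q i j
      (Fin.ne_of_val_ne (by omega)) (Fin.ne_of_val_ne (by omega)) hij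
    rw [CovAux.I3] at h3
    rw [h3]
  have hcard : (Finset.univ.filter fun q : Fin d => (q:ℕ) < r).card = r := by
    have hr' : r ≤ d := by omega
    rw [show (Finset.univ.filter fun q : Fin d => (q:ℕ) < r)
        = Finset.image (Fin.castLE hr') Finset.univ from ?_]
    · rw [Finset.card_image_of_injective _ (Fin.castLE_injective hr'), Finset.card_univ,
        Fintype.card_fin]
    · ext x
      simp only [Finset.mem_filter, Finset.mem_univ, true_and, Finset.mem_image]
      constructor
      · intro hx
        exact ⟨⟨(x:ℕ), hx⟩, Fin.ext rfl⟩
      · rintro ⟨y, -, rfl⟩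
        exact y.isLt
  have htotal : (∫ U, ((star (U : Matrix (Fin d) (Fin d) ℂ) * rhoR d r
        * (U : Matrix (Fin d) (Fin d) ℂ)) k k).re *
        (‖(U : Matrix (Fin d) (Fin d) ℂ) i k‖ ^ 2 * ‖(U : Matrix (Fin d) (Fin d) ℂ) j k‖ ^ 2) ∂μ)
      = 1 / ((d:ℝ) * ((d:ℝ)+1) * ((d:ℝ)+2)) := by
    simp only [hpt]
    rw [integral_finset_sum _ hInt]
    have hterm : ∀ q : Fin d,
        (∫ U, (if (q:ℕ) < r then
          (r:ℝ)⁻¹ * (CovAux.nk k q U * CovAux.nk k i U * CovAux.nk k j U) else 0) ∂μ)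
        = (if (q:ℕ) < r then (r:ℝ)⁻¹ * (1 / ((d:ℝ) * ((d:ℝ)+1) * ((d:ℝ)+2))) else 0) := by
      intro q
      by_cases h : (q:ℕ) < r
      · simp only [h, if_true]
        exact hval q h
      · simp [h]
    rw [Finset.sum_congr rfl (fun q _ => hterm q), ← Finset.sum_filter, Finset.sum_const,
      hcard, nsmul_eq_mul]
    have hr0 : ((r:ℝ)) ≠ 0 := Nat.cast_ne_zero.mpr (by omega)
    field_simp
  rw [htotal]
  have hd0 : (0:ℝ) < (d:ℝ) := by exact_mod_cast (by omega : 0 < d)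
  have hd1 : (0:ℝ) < (d:ℝ) + 1 := by linarith
  have hd2 : (0:ℝ) < (d:ℝ) + 2 := by linarith
  field_simp
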